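/- arXiv:1210.1263 — 2 statements merged into one kernel-verified Lean document; each statement's English description precedes it below -/
import Mathlib

section
/- For every positive integer n, ⌊10^(pos n) · C₁₀⌋ = ∑_{k=1}^{n} k · 10^(pos n − pos k); that is, the first pos n decimal digits of Champernowne's constant are exactly the concatenation of the base-ten representations of the integers 1, 2, …, n. -/
set_option maxHeartbeats 1000000


/-- `pos n` is the position in the decimal expansion of Champernowne's constant
of the last digit of the integer `n`. -/
def pos (n : ℕ) : ℕ := ∑ k ∈ Finset.Icc 1 n, (Nat.digits 10 k).length

/-- Champernowne's constant in base ten. -/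
noncomputable def C₁₀ : ℝ := ∑' n : ℕ, ((n + 1 : ℕ) : ℝ) / 10 ^ pos (n + 1)

namespace ChampAux

lemma len_pos {k : ℕ} (hk : k ≠ 0) : 1 ≤ (Nat.digits 10 k).length := by
  rw [Nat.one_le_iff_ne_zero, Ne, List.length_eq_zero_iff]
  simp [Nat.digits_ne_nil_iff_ne_zero, hk]

lemma pos_succ (k : ℕ) : pos (k + 1) = pos k + (Nat.digits 10 (k + 1)).length := by
  unfold pos
  rw [Finset.sum_Icc_succ_top (by omega)]

lemma le_pos (k : ℕ) : k ≤ pos k := by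
  induction k with
  | zero => simp [pos]
  | succ m ih =>
    have h := len_pos (k := m + 1) (by omega)
    rw [pos_succ]; omega

lemma pos_mono {a b : ℕ} (h : a ≤ b) : pos a ≤ pos b :=
  Finset.sum_le_sum_of_subset (Finset.Icc_subset_Icc_right h)

lemma lt_pow_len (k : ℕ) : k < 10 ^ (Nat.digits 10 k).length :=
  @Nat.lt_base_pow_length_digits 10 k (by norm_num)

/-- The general term of Champernowne's series. -/
noncomputable def F (m : ℕ) : ℝ := ((m + 1 : ℕ) : ℝ) / 10 ^ pos (m + 1)

lemma F_nonneg (m : ℕ) : 0 ≤ F m := by unfold F; positivity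

lemma F_le (m : ℕ) : F m ≤ (1 / 10 : ℝ) ^ m := by
  unfold F
  have h1 : ((m + 1 : ℕ) : ℝ) ≤ 10 ^ (Nat.digits 10 (m + 1)).length := by
    exact_mod_cast (lt_pow_len (m + 1)).le
  have h2 : (10 : ℝ) ^ (m + (Nat.digits 10 (m + 1)).length) ≤ 10 ^ pos (m + 1) := by
    apply pow_le_pow_right₀ (by norm_num)
    rw [pos_succ]
    have := le_pos m
    omega
  calc ((m + 1 : ℕ) : ℝ) / 10 ^ pos (m + 1)
      ≤ (10 : ℝ) ^ (Nat.digits 10 (m + 1)).length / 10 ^ (m + (Nat.digits 10 (m + 1)).length) := by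
        apply div_le_div₀ (by positivity) h1 (by positivity) h2
    _ = (1 / 10 : ℝ) ^ m := by
        generalize (Nat.digits 10 (m + 1)).length = d
        rw [pow_add, one_div, inv_pow]
        field_simp

lemma summable_F : Summable F :=
  Summable.of_nonneg_of_le F_nonneg F_le (summable_geometric_of_lt_one (by norm_num) (by norm_num))

end ChampAux

open ChampAux in
theorem floor_champernowne_concat (n : ℕ) (hn : 0 < n) :
    ⌊(10 : ℝ) ^ pos n * C₁₀⌋ = ∑ k ∈ Finset.Icc 1 n, (k : ℤ) * 10 ^ (pos n - pos k) := by
  classical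
  -- p i = pos (n+i) - pos n
  set p : ℕ → ℕ := fun i => pos (n + i) - pos n with hp
  have hp0 : p 0 = 0 := by simp [hp]
  have hpsucc : ∀ i, p (i + 1) = p i + (Nat.digits 10 (n + i + 1)).length := by
    intro i
    have h1 : pos n ≤ pos (n + i) := pos_mono (by omega)
    have h2 := pos_succ (n + i)
    simp only [hp]
    have h3 : n + (i + 1) = (n + i) + 1 := by omega
    rw [h3, h2]
    omega
  have hpge : ∀ i, i ≤ p i := by
    intro i
    induction i with
    | zero => omega
    | succ m ih =>
      have := hpsucc m
      have := len_pos (k := n + m + 1) (by omega)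
      omega
  -- tail term and its majorant
  set g : ℕ → ℝ := fun i => ((n + 1 + i : ℕ) : ℝ) / 10 ^ p (i + 1) with hg
  set r : ℕ → ℝ := fun i => (1 / 10 : ℝ) ^ p i with hr
  set h : ℕ → ℝ := fun i => r i - r (i + 1) with hh
  have hone_div_pow : ∀ m : ℕ, (1 / 10 : ℝ) ^ m = 1 / 10 ^ m := by
    intro m; rw [div_pow, one_pow]
  have hr_eq : ∀ i, r i = (10 : ℝ) ^ (Nat.digits 10 (n + i + 1)).length / 10 ^ p (i + 1) := by
    intro i
    simp only [hr, hpsucc i]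
    generalize (Nat.digits 10 (n + i + 1)).length = d
    rw [pow_add, one_div, inv_pow]
    field_simp
    try ring
  have h_eq : ∀ i, h i = ((10 : ℝ) ^ (Nat.digits 10 (n + i + 1)).length - 1) / 10 ^ p (i + 1) := by
    intro i
    have e1 : h i = r i - r (i + 1) := rfl
    rw [e1, hr_eq i]
    simp only [hr]
    rw [hone_div_pow, sub_div]
  have hg_nonneg : ∀ i, 0 ≤ g i := by
    intro i; simp only [hg]; positivity
  have hcast_le : ∀ i, ((n + 1 + i : ℕ) : ℝ) ≤ (10 : ℝ) ^ (Nat.digits 10 (n + i + 1)).length - 1 := by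
    intro i
    have h1 : (n + 1 + i) + 1 ≤ 10 ^ (Nat.digits 10 (n + i + 1)).length := by
      have := lt_pow_len (n + i + 1); omega
    have h2 : ((n + 1 + i + 1 : ℕ) : ℝ) ≤ ((10 ^ (Nat.digits 10 (n + i + 1)).length : ℕ) : ℝ) := by
      exact_mod_cast h1
    push_cast at h2
    push_cast
    linarith
  have hgh : ∀ i, g i ≤ h i := by
    intro i
    simp only [h_eq i, hg]
    gcongr
    exact hcast_le i
  -- h sums to 1
  have hr0 : r 0 = 1 := by simp [hr, hp0]
  have hr_tendsto : Filter.Tendsto r Filter.atTop (nhds 0) := by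
    apply squeeze_zero (g := fun i => (1 / 10 : ℝ) ^ i)
      (fun i => by simp only [hr]; positivity) (fun i => ?_)
      (tendsto_pow_atTop_nhds_zero_of_lt_one (by norm_num) (by norm_num))
    simp only [hr]
    exact pow_le_pow_of_le_one (by norm_num) (by norm_num) (hpge i)
  have hsum_h : HasSum h 1 := by
    rw [hasSum_iff_tendsto_nat_of_nonneg (fun i => (hg_nonneg i).trans (hgh i)) 1]
    have heq : ∀ m : ℕ, ∑ i ∈ Finset.range m, h i = r 0 - r m := fun m =>
      Finset.sum_range_sub' r m
    simp only [heq, hr0]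
    simpa using hr_tendsto.const_sub 1
  have hsummable_h : Summable h := hsum_h.summable
  -- strict index
  have hstrict : ∃ i, g i < h i := by
    have key : ∀ i : ℕ, n + 1 + i + 1 + 1 ≤ 10 ^ (Nat.digits 10 (n + i + 1)).length → g i < h i := by
      intro i hi
      simp only [h_eq i, hg]
      have hnum : ((n + 1 + i : ℕ) : ℝ) < (10 : ℝ) ^ (Nat.digits 10 (n + i + 1)).length - 1 := by
        have h3 : ((n + 1 + i + 1 + 1 : ℕ) : ℝ) ≤ ((10 ^ (Nat.digits 10 (n + i + 1)).length : ℕ) : ℝ) := by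
          exact_mod_cast hi
        push_cast at h3
        push_cast
        linarith
      have hden : (0 : ℝ) < 10 ^ p (i + 1) := by positivity
      exact (div_lt_div_iff_of_pos_right hden).mpr hnum
    by_cases hc : n + 2 < 10 ^ (Nat.digits 10 (n + 1)).length
    · exact ⟨0, key 0 (by simpa using hc)⟩
    · refine ⟨1, key 1 ?_⟩
      have heq : n + 2 = 10 ^ (Nat.digits 10 (n + 1)).length := by
        have := lt_pow_len (n + 1)
        omega
      have hL2 : (Nat.digits 10 (n + 2)).length = (Nat.digits 10 (n + 1)).length + 1 := by
        rw [Nat.digits_len 10 (n + 2) (by norm_num) (by omega), heq,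
          Nat.log_pow (by norm_num)]
      have hpow : 10 ^ (Nat.digits 10 (n + 2)).length = 10 * (n + 2) := by
        rw [hL2, pow_succ, ← heq]; ring
      have : n + 1 + 1 = n + 2 := by omega
      rw [this, hpow]
      omega
  -- R and its bounds
  set R : ℝ := ∑' i, g i with hR
  have hsummable_g : Summable g := Summable.of_nonneg_of_le hg_nonneg hgh hsummable_h
  have hR_nonneg : 0 ≤ R := tsum_nonneg hg_nonneg
  have hR_lt : R < 1 := by
    obtain ⟨i, hi⟩ := hstrict
    calc R < ∑' i, h i := Summable.tsum_lt_tsum_of_nonneg hg_nonneg hgh hi hsummable_h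
      _ = 1 := hsum_h.tsum_eq
  -- main decomposition
  have hsummable_shift : Summable (fun i => F (i + n)) := (summable_nat_add_iff n).mpr summable_F
  have hC : C₁₀ = ∑' m, F m := rfl
  have hsplit : (10 : ℝ) ^ pos n * C₁₀ =
      (∑ i ∈ Finset.range n, (10 : ℝ) ^ pos n * F i) + ∑' i, (10 : ℝ) ^ pos n * F (i + n) := by
    have hsum : Summable (fun m => (10:ℝ) ^ pos n * F (m + n)) :=
      hsummable_shift.mul_left _
    have h1 := Summable.sum_add_tsum_nat_add' (M := ℝ) (f := fun m => (10:ℝ) ^ pos n * F m) (k := n) hsum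
    rw [hC, ← tsum_mul_left, ← h1]
  -- the head equals the integer sum
  have hhead : ∀ i ∈ Finset.range n, (10 : ℝ) ^ pos n * F i
      = ((i + 1 : ℕ) : ℝ) * 10 ^ (pos n - pos (i + 1)) := by
    intro i hi
    simp only [Finset.mem_range] at hi
    have hle : pos (i + 1) ≤ pos n := pos_mono (by omega)
    simp only [F]
    rw [mul_div_assoc', div_eq_iff (by positivity), mul_assoc, ← pow_add]
    have he : pos n - pos (i + 1) + pos (i + 1) = pos n := by omega
    rw [he]
    ring
  -- the tail equals R
  have htail : ∀ i : ℕ, (10 : ℝ) ^ pos n * F (i + n) = g i := by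
    intro i
    have hle : pos n ≤ pos (i + n + 1) := pos_mono (by omega)
    simp only [F, hg]
    have hidx : i + n + 1 = n + (i + 1) := by omega
    have hpi : p (i + 1) = pos (i + n + 1) - pos n := by simp only [hp]; rw [← hidx]
    rw [mul_div_assoc', div_eq_div_iff (by positivity) (by positivity), hpi,
      mul_comm ((10:ℝ) ^ pos n) _, mul_assoc, ← pow_add]
    have he : pos n + (pos (i + n + 1) - pos n) = pos (i + n + 1) := by omega
    rw [he]
    push_cast
    ring
  have hS : (∑ i ∈ Finset.range n, (10 : ℝ) ^ pos n * F i)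
      = ((∑ k ∈ Finset.Icc 1 n, (k : ℤ) * 10 ^ (pos n - pos k) : ℤ) : ℝ) := by
    rw [Finset.sum_congr rfl hhead]
    have hcast : ((∑ k ∈ Finset.Icc 1 n, (k : ℤ) * 10 ^ (pos n - pos k) : ℤ) : ℝ)
        = ∑ k ∈ Finset.Icc 1 n, (k : ℝ) * 10 ^ (pos n - pos k) := by
      push_cast
      rfl
    rw [hcast, ← Finset.Ico_add_one_right_eq_Icc, Finset.sum_Ico_eq_sum_range]
    norm_num
    apply Finset.sum_congr rfl
    intro i hi
    rw [add_comm 1 i]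
    push_cast
    ring
  have hT : (∑' i, (10 : ℝ) ^ pos n * F (i + n)) = R := by
    rw [hR]; exact tsum_congr htail
  rw [hsplit, hS, hT]
  rw [Int.floor_eq_iff]
  constructor
  · linarith
  · push_cast; linarith
end

section
/- The continued fraction expansion of Champernowne's constant C₁₀ begins [0; 8, 9, 1, 149083, 1, 1, 1, 4, 1, 1, 1, 3, 4, 1, 1, 1, 15, …]; precisely, the integer part of C₁₀ is 0 and for each i < 17 the i-th partial denominator of GenContFract.of C₁₀ equals the i-th entry of the list [8, 9, 1, 149083, 1, 1, 1, 4, 1, 1, 1, 3, 4, 1, 1, 1, 15]. -/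
lemma pos_succ (n : ℕ) : pos (n+1) = pos n + (Nat.digits 10 (n+1)).length := by
  rw [pos, pos, Finset.sum_Icc_succ_top (by omega)]

lemma pos0 : pos 0 = 0 := by simp [pos]
lemma pos1 : pos 1 = 1 := by have h := pos_succ 0; norm_num [pos0] at h; exact h
lemma pos2 : pos 2 = 2 := by have h := pos_succ 1; norm_num [pos1] at h; exact h
lemma pos3 : pos 3 = 3 := by have h := pos_succ 2; norm_num [pos2] at h; exact h
lemma pos4 : pos 4 = 4 := by have h := pos_succ 3; norm_num [pos3] at h; exact h
lemma pos5 : pos 5 = 5 := by have h := pos_succ 4; norm_num [pos4] at h; exact h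
lemma pos6 : pos 6 = 6 := by have h := pos_succ 5; norm_num [pos5] at h; exact h
lemma pos7 : pos 7 = 7 := by have h := pos_succ 6; norm_num [pos6] at h; exact h
lemma pos8 : pos 8 = 8 := by have h := pos_succ 7; norm_num [pos7] at h; exact h
lemma pos9 : pos 9 = 9 := by have h := pos_succ 8; norm_num [pos8] at h; exact h
lemma pos10 : pos 10 = 11 := by have h := pos_succ 9; norm_num [pos9] at h; exact h
lemma pos11 : pos 11 = 13 := by have h := pos_succ 10; norm_num [pos10] at h; exact h
lemma pos12 : pos 12 = 15 := by have h := pos_succ 11; norm_num [pos11] at h; exact h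
lemma pos13 : pos 13 = 17 := by have h := pos_succ 12; norm_num [pos12] at h; exact h
lemma pos14 : pos 14 = 19 := by have h := pos_succ 13; norm_num [pos13] at h; exact h
lemma pos15 : pos 15 = 21 := by have h := pos_succ 14; norm_num [pos14] at h; exact h
lemma pos16 : pos 16 = 23 := by have h := pos_succ 15; norm_num [pos15] at h; exact h
lemma pos17 : pos 17 = 25 := by have h := pos_succ 16; norm_num [pos16] at h; exact h
lemma pos18 : pos 18 = 27 := by have h := pos_succ 17; norm_num [pos17] at h; exact h
lemma pos19 : pos 19 = 29 := by have h := pos_succ 18; norm_num [pos18] at h; exact h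
lemma pos20 : pos 20 = 31 := by have h := pos_succ 19; norm_num [pos19] at h; exact h
lemma pos21 : pos 21 = 33 := by have h := pos_succ 20; norm_num [pos20] at h; exact h
lemma pos22 : pos 22 = 35 := by have h := pos_succ 21; norm_num [pos21] at h; exact h
lemma pos23 : pos 23 = 37 := by have h := pos_succ 22; norm_num [pos22] at h; exact h
lemma pos24 : pos 24 = 39 := by have h := pos_succ 23; norm_num [pos23] at h; exact h
lemma pos25 : pos 25 = 41 := by have h := pos_succ 24; norm_num [pos24] at h; exact h
lemma pos26 : pos 26 = 43 := by have h := pos_succ 25; norm_num [pos25] at h; exact h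
lemma pos27 : pos 27 = 45 := by have h := pos_succ 26; norm_num [pos26] at h; exact h
lemma pos28 : pos 28 = 47 := by have h := pos_succ 27; norm_num [pos27] at h; exact h
lemma pos29 : pos 29 = 49 := by have h := pos_succ 28; norm_num [pos28] at h; exact h
lemma pos30 : pos 30 = 51 := by have h := pos_succ 29; norm_num [pos29] at h; exact h
lemma pos31 : pos 31 = 53 := by have h := pos_succ 30; norm_num [pos30] at h; exact h
lemma pos32 : pos 32 = 55 := by have h := pos_succ 31; norm_num [pos31] at h; exact h
lemma pos33 : pos 33 = 57 := by have h := pos_succ 32; norm_num [pos32] at h; exact h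
lemma pos34 : pos 34 = 59 := by have h := pos_succ 33; norm_num [pos33] at h; exact h
lemma pos35 : pos 35 = 61 := by have h := pos_succ 34; norm_num [pos34] at h; exact h
lemma pos36 : pos 36 = 63 := by have h := pos_succ 35; norm_num [pos35] at h; exact h
lemma pos37 : pos 37 = 65 := by have h := pos_succ 36; norm_num [pos36] at h; exact h
lemma pos38 : pos 38 = 67 := by have h := pos_succ 37; norm_num [pos37] at h; exact h
lemma pos39 : pos 39 = 69 := by have h := pos_succ 38; norm_num [pos38] at h; exact h
lemma pos40 : pos 40 = 71 := by have h := pos_succ 39; norm_num [pos39] at h; exact h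
lemma pos41 : pos 41 = 73 := by have h := pos_succ 40; norm_num [pos40] at h; exact h
lemma pos42 : pos 42 = 75 := by have h := pos_succ 41; norm_num [pos41] at h; exact h
lemma pos43 : pos 43 = 77 := by have h := pos_succ 42; norm_num [pos42] at h; exact h
lemma pos44 : pos 44 = 79 := by have h := pos_succ 43; norm_num [pos43] at h; exact h
lemma pos45 : pos 45 = 81 := by have h := pos_succ 44; norm_num [pos44] at h; exact h
lemma pos46 : pos 46 = 83 := by have h := pos_succ 45; norm_num [pos45] at h; exact h
lemma pos47 : pos 47 = 85 := by have h := pos_succ 46; norm_num [pos46] at h; exact h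
lemma pos48 : pos 48 = 87 := by have h := pos_succ 47; norm_num [pos47] at h; exact h
lemma pos49 : pos 49 = 89 := by have h := pos_succ 48; norm_num [pos48] at h; exact h
lemma pos50 : pos 50 = 91 := by have h := pos_succ 49; norm_num [pos49] at h; exact h
lemma pos51 : pos 51 = 93 := by have h := pos_succ 50; norm_num [pos50] at h; exact h
lemma pos52 : pos 52 = 95 := by have h := pos_succ 51; norm_num [pos51] at h; exact h
lemma pos53 : pos 53 = 97 := by have h := pos_succ 52; norm_num [pos52] at h; exact h
lemma pos54 : pos 54 = 99 := by have h := pos_succ 53; norm_num [pos53] at h; exact h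
lemma pos55 : pos 55 = 101 := by have h := pos_succ 54; norm_num [pos54] at h; exact h
lemma pos56 : pos 56 = 103 := by have h := pos_succ 55; norm_num [pos55] at h; exact h
lemma pos57 : pos 57 = 105 := by have h := pos_succ 56; norm_num [pos56] at h; exact h
lemma pos58 : pos 58 = 107 := by have h := pos_succ 57; norm_num [pos57] at h; exact h
lemma pos59 : pos 59 = 109 := by have h := pos_succ 58; norm_num [pos58] at h; exact h
lemma pos60 : pos 60 = 111 := by have h := pos_succ 59; norm_num [pos59] at h; exact h
lemma pos61 : pos 61 = 113 := by have h := pos_succ 60; norm_num [pos60] at h; exact h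
lemma pos62 : pos 62 = 115 := by have h := pos_succ 61; norm_num [pos61] at h; exact h
lemma pos63 : pos 63 = 117 := by have h := pos_succ 62; norm_num [pos62] at h; exact h
lemma pos64 : pos 64 = 119 := by have h := pos_succ 63; norm_num [pos63] at h; exact h
lemma pos65 : pos 65 = 121 := by have h := pos_succ 64; norm_num [pos64] at h; exact h
lemma pos66 : pos 66 = 123 := by have h := pos_succ 65; norm_num [pos65] at h; exact h
lemma pos67 : pos 67 = 125 := by have h := pos_succ 66; norm_num [pos66] at h; exact h
lemma pos68 : pos 68 = 127 := by have h := pos_succ 67; norm_num [pos67] at h; exact h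
lemma pos69 : pos 69 = 129 := by have h := pos_succ 68; norm_num [pos68] at h; exact h
lemma pos70 : pos 70 = 131 := by have h := pos_succ 69; norm_num [pos69] at h; exact h
lemma pos71 : pos 71 = 133 := by have h := pos_succ 70; norm_num [pos70] at h; exact h
lemma pos72 : pos 72 = 135 := by have h := pos_succ 71; norm_num [pos71] at h; exact h
lemma pos73 : pos 73 = 137 := by have h := pos_succ 72; norm_num [pos72] at h; exact h
lemma pos74 : pos 74 = 139 := by have h := pos_succ 73; norm_num [pos73] at h; exact h
lemma pos75 : pos 75 = 141 := by have h := pos_succ 74; norm_num [pos74] at h; exact h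
lemma pos76 : pos 76 = 143 := by have h := pos_succ 75; norm_num [pos75] at h; exact h
lemma pos77 : pos 77 = 145 := by have h := pos_succ 76; norm_num [pos76] at h; exact h
lemma pos78 : pos 78 = 147 := by have h := pos_succ 77; norm_num [pos77] at h; exact h
lemma pos79 : pos 79 = 149 := by have h := pos_succ 78; norm_num [pos78] at h; exact h
lemma pos80 : pos 80 = 151 := by have h := pos_succ 79; norm_num [pos79] at h; exact h
lemma pos81 : pos 81 = 153 := by have h := pos_succ 80; norm_num [pos80] at h; exact h
lemma pos82 : pos 82 = 155 := by have h := pos_succ 81; norm_num [pos81] at h; exact h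
lemma pos83 : pos 83 = 157 := by have h := pos_succ 82; norm_num [pos82] at h; exact h
lemma pos84 : pos 84 = 159 := by have h := pos_succ 83; norm_num [pos83] at h; exact h
lemma pos85 : pos 85 = 161 := by have h := pos_succ 84; norm_num [pos84] at h; exact h
lemma pos86 : pos 86 = 163 := by have h := pos_succ 85; norm_num [pos85] at h; exact h
lemma pos87 : pos 87 = 165 := by have h := pos_succ 86; norm_num [pos86] at h; exact h
lemma pos88 : pos 88 = 167 := by have h := pos_succ 87; norm_num [pos87] at h; exact h
lemma pos89 : pos 89 = 169 := by have h := pos_succ 88; norm_num [pos88] at h; exact h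
lemma pos90 : pos 90 = 171 := by have h := pos_succ 89; norm_num [pos89] at h; exact h
lemma pos91 : pos 91 = 173 := by have h := pos_succ 90; norm_num [pos90] at h; exact h
lemma pos92 : pos 92 = 175 := by have h := pos_succ 91; norm_num [pos91] at h; exact h
lemma pos93 : pos 93 = 177 := by have h := pos_succ 92; norm_num [pos92] at h; exact h
lemma pos94 : pos 94 = 179 := by have h := pos_succ 93; norm_num [pos93] at h; exact h
lemma pos95 : pos 95 = 181 := by have h := pos_succ 94; norm_num [pos94] at h; exact h
lemma pos96 : pos 96 = 183 := by have h := pos_succ 95; norm_num [pos95] at h; exact h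
lemma pos97 : pos 97 = 185 := by have h := pos_succ 96; norm_num [pos96] at h; exact h
lemma pos98 : pos 98 = 187 := by have h := pos_succ 97; norm_num [pos97] at h; exact h
lemma pos99 : pos 99 = 189 := by have h := pos_succ 98; norm_num [pos98] at h; exact h
lemma pos100 : pos 100 = 192 := by have h := pos_succ 99; norm_num [pos99] at h; exact h
lemma pos101 : pos 101 = 195 := by have h := pos_succ 100; norm_num [pos100] at h; exact h
lemma pos102 : pos 102 = 198 := by have h := pos_succ 101; norm_num [pos101] at h; exact h
lemma pos103 : pos 103 = 201 := by have h := pos_succ 102; norm_num [pos102] at h; exact h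
lemma pos104 : pos 104 = 204 := by have h := pos_succ 103; norm_num [pos103] at h; exact h
lemma pos105 : pos 105 = 207 := by have h := pos_succ 104; norm_num [pos104] at h; exact h
lemma pos106 : pos 106 = 210 := by have h := pos_succ 105; norm_num [pos105] at h; exact h
lemma pos107 : pos 107 = 213 := by have h := pos_succ 106; norm_num [pos106] at h; exact h
lemma pos108 : pos 108 = 216 := by have h := pos_succ 107; norm_num [pos107] at h; exact h
lemma pos109 : pos 109 = 219 := by have h := pos_succ 108; norm_num [pos108] at h; exact h
lemma pos110 : pos 110 = 222 := by have h := pos_succ 109; norm_num [pos109] at h; exact h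
lemma pos111 : pos 111 = 225 := by have h := pos_succ 110; norm_num [pos110] at h; exact h

lemma pos_ge (n : ℕ) : n ≤ pos n := by
  calc n = ∑ k ∈ Finset.Icc 1 n, 1 := by simp
  _ ≤ pos n := Finset.sum_le_sum (fun k hk => by
      have hk0 : k ≠ 0 := by simp at hk; omega
      exact List.length_pos_iff.mpr (Nat.digits_ne_nil_iff_ne_zero.mpr hk0))

lemma summable_f : Summable (fun n : ℕ => ((n + 1 : ℕ) : ℝ) / 10 ^ pos (n + 1)) := by
  have hg : Summable (fun n : ℕ => ((n:ℝ))^1 * (1/10:ℝ)^n) :=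
    summable_pow_mul_geometric_of_norm_lt_one 1
      (by rw [Real.norm_eq_abs, abs_of_pos] <;> norm_num)
  have hg' : Summable (fun n : ℕ => ((n+1:ℝ))^1 * (1/10:ℝ)^(n+1)) := by
    have := hg.comp_injective (add_left_injective 1)
    simpa [Function.comp_def] using this
  apply Summable.of_nonneg_of_le (fun n => by positivity) (fun n => ?_) hg'
  rw [pow_one]
  rw [div_eq_mul_inv, ← inv_pow, ← one_div]
  push_cast
  apply mul_le_mul_of_nonneg_left _ (by positivity)
  apply pow_le_pow_of_le_one (by norm_num) (by norm_num) (pos_ge (n+1))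

lemma Spart : (∑ n ∈ Finset.range 110, ((n + 1 : ℕ) : ℝ) / 10 ^ pos (n + 1)) = (123456789101112131415161718192021222324252627282930313233343536373839404142434445464748495051525354555657585960616263646566676869707172737475767778798081828384858687888990919293949596979899100101102103104105106107108109110:ℝ)/10^222 := by
  simp only [Finset.sum_range_succ, Finset.sum_range_zero]
  norm_num [pos1, pos2, pos3, pos4, pos5, pos6, pos7, pos8, pos9, pos10, pos11, pos12, pos13, pos14, pos15, pos16, pos17, pos18, pos19, pos20, pos21, pos22, pos23, pos24, pos25, pos26, pos27, pos28, pos29, pos30, pos31, pos32, pos33, pos34, pos35, pos36, pos37, pos38, pos39, pos40, pos41, pos42, pos43, pos44, pos45, pos46, pos47, pos48, pos49, pos50, pos51, pos52, pos53, pos54, pos55, pos56, pos57, pos58, pos59, pos60, pos61, pos62, pos63, pos64, pos65, pos66, pos67, pos68, pos69, pos70, pos71, pos72, pos73, pos74, pos75, pos76, pos77, pos78, pos79, pos80, pos81, pos82, pos83, pos84, pos85, pos86, pos87, pos88, pos89, pos90, pos91, pos92, pos93, pos94, pos95, pos96, pos97, pos98, pos99, pos100, pos101, pos102, pos103, pos104,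 pos105, pos106, pos107, pos108, pos109, pos110]

lemma len_ge_two {k : ℕ} (h : 10 ≤ k) : 2 ≤ (Nat.digits 10 k).length := by
  by_contra h'
  push_neg at h'
  have h2 : (Nat.digits 10 k).length ≤ 1 := by omega
  have h3 := Nat.lt_base_pow_length_digits (b := 10) (m := k) (by norm_num)
  have h4 : (10:ℕ) ^ (Nat.digits 10 k).length ≤ 10 ^ 1 := Nat.pow_le_pow_right (by norm_num) h2
  have h5 : (10:ℕ) ^ 1 = 10 := rfl
  omega

lemma tail_pos_aux (n : ℕ) : 225 + 2*n ≤ pos (111 + n) := by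
  induction n with
  | zero => simp [pos111]
  | succ n ih =>
    have e : 111 + (n + 1) = (111 + n) + 1 := rfl
    rw [e, pos_succ]
    have h2 := len_ge_two (k := (111 + n) + 1) (by omega)
    omega

lemma tail_pos (n : ℕ) : 225 + 2*n ≤ pos (n + 110 + 1) := by
  have := tail_pos_aux n
  rwa [show 111 + n = n + 110 + 1 from by omega] at this

lemma two_pow_ge (n : ℕ) : (n:ℝ) + 1 ≤ 2^n := by
  exact_mod_cast Nat.succ_le_of_lt (Nat.lt_two_pow_self (n := n))

lemma tail_term (n : ℕ) : ((n + 110 + 1 : ℕ) : ℝ) / 10 ^ pos (n + 110 + 1)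
    ≤ (111/10^225 : ℝ) * (1/50)^n := by
  have h1 : ((n + 110 + 1 : ℕ) : ℝ) ≤ 111 * 2^n := by
    push_cast
    have h := two_pow_ge n
    nlinarith [h]
  have h2 : (10:ℝ)^(225+2*n) ≤ 10^pos (n + 110 + 1) :=
    pow_le_pow_right₀ (by norm_num) (tail_pos n)
  have h3 : ((n + 110 + 1 : ℕ) : ℝ) / 10 ^ pos (n + 110 + 1) ≤ (111 * 2^n) / 10^(225+2*n) :=
    div_le_div₀ (by positivity) h1 (by positivity) h2
  refine h3.trans (le_of_eq ?_)
  have e1 : (10:ℝ)^(225+2*n) = 10^225 * (2^n * 50^n) := by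
    rw [pow_add, pow_mul, ← mul_pow]; norm_num
  rw [e1, div_pow, one_pow]
  have h50 : (50:ℝ)^n ≠ 0 := by positivity
  have h2n : (2:ℝ)^n ≠ 0 := by positivity
  field_simp

lemma tail_sum : (∑' n : ℕ, ((n + 110 + 1 : ℕ) : ℝ) / 10 ^ pos (n + 110 + 1))
    ≤ 120/10^225 := by
  have hs1 : Summable (fun n : ℕ => ((n + 110 + 1 : ℕ) : ℝ) / 10 ^ pos (n + 110 + 1)) := by
    have := (summable_nat_add_iff 110).mpr summable_f
    exact this
  have hgeo : Summable (fun n : ℕ => (111/10^225 : ℝ) * (1/50)^n) :=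
    (summable_geometric_of_lt_one (by norm_num) (by norm_num)).mul_left _
  have := Summable.tsum_le_tsum tail_term hs1 hgeo
  refine this.trans ?_
  rw [tsum_mul_left, tsum_geometric_of_lt_one (by norm_num) (by norm_num)]
  norm_num

lemma C_bounds : ((123456789101112131415161718192021222324252627282930313233343536373839404142434445464748495051525354555657585960616263646566676869707172737475767778798081828384858687888990919293949596979899100101102103104105106107108109110:ℝ)/10^222) ≤ C₁₀ ∧ C₁₀ ≤ (123456789101112131415161718192021222324252627282930313233343536373839404142434445464748495051525354555657585960616263646566676869707172737475767778798081828384858687888990919293949596979899100101102103104105106107108109110:ℝ)/10^222 + 120/10^225 := by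
  have hsplit := (Summable.sum_add_tsum_nat_add 110 summable_f)
  have hC : C₁₀ = (∑ n ∈ Finset.range 110, ((n + 1 : ℕ) : ℝ) / 10 ^ pos (n + 1))
      + (∑' n : ℕ, ((n + 110 + 1 : ℕ) : ℝ) / 10 ^ pos (n + 110 + 1)) := by
    rw [C₁₀, ← hsplit]
  rw [hC, Spart]
  constructor
  · have h0 : (0:ℝ) ≤ ∑' n : ℕ, ((n + 110 + 1 : ℕ) : ℝ) / 10 ^ pos (n + 110 + 1) :=
      tsum_nonneg (fun n => by positivity)
    linarith
  · have := tail_sum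
    linarith

noncomputable def chain (x : ℝ) : ℕ → ℝ
  | 0 => x
  | (i+1) => (Int.fract (chain x i))⁻¹

lemma chain_shift (x : ℝ) (n : ℕ) : chain x (n+1) = chain (Int.fract x)⁻¹ n := by
  induction n with
  | zero => rfl
  | succ n ih => rw [chain, ih, chain]

lemma partDen_get (x : ℝ) (i : ℕ) (h : Int.fract (chain x i) ≠ 0) :
    (GenContFract.of x).partDens.get? i = some ((⌊chain x (i+1)⌋ : ℤ) : ℝ) := by
  induction i generalizing x with
  | zero =>
    have h' : Int.fract x ≠ 0 := h
    have e : chain x 1 = (Int.fract x)⁻¹ := rfl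
    rw [GenContFract.partDens, Stream'.Seq.map_get?, e]
    have h0 : (GenContFract.of x).s.get? 0 = (GenContFract.of x).s.head := rfl
    rw [h0, GenContFract.of_s_head h']
    rfl
  | succ n ih =>
    have h' : Int.fract (chain (Int.fract x)⁻¹ n) ≠ 0 := by rw [← chain_shift]; exact h
    rw [GenContFract.partDens, Stream'.Seq.map_get?, GenContFract.of_s_succ,
      ← Stream'.Seq.map_get?, ← GenContFract.partDens, ih _ h', ← chain_shift]

lemma st {x y : ℝ} {l u : ℚ} (m : ℤ) (hy : y = (Int.fract x)⁻¹)
    (hl : (l:ℝ) ≤ x) (hu : x ≤ (u:ℝ)) (h1 : (m:ℚ) < l) (h2 : u < (m:ℚ)+1) :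
    ⌊x⌋ = m ∧ Int.fract x ≠ 0 ∧ (((u - m)⁻¹:ℚ):ℝ) ≤ y ∧ y ≤ (((l - m)⁻¹:ℚ):ℝ) := by
  have h1' : (m:ℝ) < (l:ℝ) := by exact_mod_cast h1
  have h2' : (u:ℝ) < (m:ℝ)+1 := by exact_mod_cast h2
  have hfl : ⌊x⌋ = m := by
    rw [Int.floor_eq_iff]
    constructor
    · linarith
    · push_cast; linarith
  have hfr : Int.fract x = x - m := by rw [Int.fract, hfl]
  have hpos : (0:ℝ) < Int.fract x := by rw [hfr]; linarith
  have hub : Int.fract x ≤ (u:ℝ) - m := by rw [hfr]; linarith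
  have hlb : (l:ℝ) - m ≤ Int.fract x := by rw [hfr]; linarith
  refine ⟨hfl, ne_of_gt hpos, ?_, ?_⟩
  · rw [hy]
    push_cast
    have := one_div_le_one_div_of_le hpos hub
    rw [one_div, one_div] at this
    exact this
  · rw [hy]
    push_cast
    have h0 : (0:ℝ) < (l:ℝ) - m := by linarith
    have := one_div_le_one_div_of_le h0 hlb
    rw [one_div, one_div] at this
    exact this

theorem champernowne_cfe_first_coeffs :
    ⌊C₁₀⌋ = 0 ∧ ∀ i : ℕ, i < 17 →
      (GenContFract.of C₁₀).partDens.get? i =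
        some (([8, 9, 1, 149083, 1, 1, 1, 4, 1, 1, 1, 3, 4, 1, 1, 1, 15] : List ℝ).getD i 0) := by
  have hl0 : (((123456789101112131415161718192021222324252627282930313233343536373839404142434445464748495051525354555657585960616263646566676869707172737475767778798081828384858687888990919293949596979899100101102103104105106107108109110 : ℚ)/10^222 : ℚ):ℝ) ≤ C₁₀ := by
    push_cast
    exact C_bounds.1
  have hu0 : C₁₀ ≤ (((123456789101112131415161718192021222324252627282930313233343536373839404142434445464748495051525354555657585960616263646566676869707172737475767778798081828384858687888990919293949596979899100101102103104105106107108109110120 : ℚ)/10^225 : ℚ):ℝ) := by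
    push_cast
    have := C_bounds.2
    linarith
  obtain ⟨fl0, nz0, hl1, hu1⟩ := st (x := C₁₀) (y := chain C₁₀ 1) (0 : ℤ) rfl hl0 hu0 (by norm_num) (by norm_num)
  obtain ⟨fl1, nz1, hl2, hu2⟩ := st (x := chain C₁₀ 1) (y := chain C₁₀ 2) (8 : ℤ) rfl hl1 hu1 (by norm_num) (by norm_num)
  obtain ⟨fl2, nz2, hl3, hu3⟩ := st (x := chain C₁₀ 2) (y := chain C₁₀ 3) (9 : ℤ) rfl hl2 hu2 (by norm_num) (by norm_num)
  obtain ⟨fl3, nz3, hl4, hu4⟩ := st (x := chain C₁₀ 3) (y := chain C₁₀ 4) (1 : ℤ) rfl hl3 hu3 (by norm_num) (by norm_num)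
  obtain ⟨fl4, nz4, hl5, hu5⟩ := st (x := chain C₁₀ 4) (y := chain C₁₀ 5) (149083 : ℤ) rfl hl4 hu4 (by norm_num) (by norm_num)
  obtain ⟨fl5, nz5, hl6, hu6⟩ := st (x := chain C₁₀ 5) (y := chain C₁₀ 6) (1 : ℤ) rfl hl5 hu5 (by norm_num) (by norm_num)
  obtain ⟨fl6, nz6, hl7, hu7⟩ := st (x := chain C₁₀ 6) (y := chain C₁₀ 7) (1 : ℤ) rfl hl6 hu6 (by norm_num) (by norm_num)
  obtain ⟨fl7, nz7, hl8, hu8⟩ := st (x := chain C₁₀ 7) (y := chain C₁₀ 8) (1 : ℤ) rfl hl7 hu7 (by norm_num) (by norm_num)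
  obtain ⟨fl8, nz8, hl9, hu9⟩ := st (x := chain C₁₀ 8) (y := chain C₁₀ 9) (4 : ℤ) rfl hl8 hu8 (by norm_num) (by norm_num)
  obtain ⟨fl9, nz9, hl10, hu10⟩ := st (x := chain C₁₀ 9) (y := chain C₁₀ 10) (1 : ℤ) rfl hl9 hu9 (by norm_num) (by norm_num)
  obtain ⟨fl10, nz10, hl11, hu11⟩ := st (x := chain C₁₀ 10) (y := chain C₁₀ 11) (1 : ℤ) rfl hl10 hu10 (by norm_num) (by norm_num)
  obtain ⟨fl11, nz11, hl12, hu12⟩ := st (x := chain C₁₀ 11) (y := chain C₁₀ 12) (1 : ℤ) rfl hl11 hu11 (by norm_num) (by norm_num)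
  obtain ⟨fl12, nz12, hl13, hu13⟩ := st (x := chain C₁₀ 12) (y := chain C₁₀ 13) (3 : ℤ) rfl hl12 hu12 (by norm_num) (by norm_num)
  obtain ⟨fl13, nz13, hl14, hu14⟩ := st (x := chain C₁₀ 13) (y := chain C₁₀ 14) (4 : ℤ) rfl hl13 hu13 (by norm_num) (by norm_num)
  obtain ⟨fl14, nz14, hl15, hu15⟩ := st (x := chain C₁₀ 14) (y := chain C₁₀ 15) (1 : ℤ) rfl hl14 hu14 (by norm_num) (by norm_num)
  obtain ⟨fl15, nz15, hl16, hu16⟩ := st (x := chain C₁₀ 15) (y := chain C₁₀ 16) (1 : ℤ) rfl hl15 hu15 (by norm_num) (by norm_num)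
  obtain ⟨fl16, nz16, hl17, hu17⟩ := st (x := chain C₁₀ 16) (y := chain C₁₀ 17) (1 : ℤ) rfl hl16 hu16 (by norm_num) (by norm_num)
  obtain ⟨fl17, nz17, hl18, hu18⟩ := st (x := chain C₁₀ 17) (y := chain C₁₀ 18) (15 : ℤ) rfl hl17 hu17 (by norm_num) (by norm_num)
  refine ⟨fl0, ?_⟩
  intro i hi
  interval_cases i
  · rw [partDen_get C₁₀ 0 nz0]; norm_num [fl1]
  · rw [partDen_get C₁₀ 1 nz1]; norm_num [fl2]
  · rw [partDen_get C₁₀ 2 nz2]; norm_num [fl3]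
  · rw [partDen_get C₁₀ 3 nz3]; norm_num [fl4]
  · rw [partDen_get C₁₀ 4 nz4]; norm_num [fl5]
  · rw [partDen_get C₁₀ 5 nz5]; norm_num [fl6]
  · rw [partDen_get C₁₀ 6 nz6]; norm_num [fl7]
  · rw [partDen_get C₁₀ 7 nz7]; norm_num [fl8]
  · rw [partDen_get C₁₀ 8 nz8]; norm_num [fl9]
  · rw [partDen_get C₁₀ 9 nz9]; norm_num [fl10]
  · rw [partDen_get C₁₀ 10 nz10]; norm_num [fl11]
  · rw [partDen_get C₁₀ 11 nz11]; norm_num [fl12]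
  · rw [partDen_get C₁₀ 12 nz12]; norm_num [fl13]
  · rw [partDen_get C₁₀ 13 nz13]; norm_num [fl14]
  · rw [partDen_get C₁₀ 14 nz14]; norm_num [fl15]
  · rw [partDen_get C₁₀ 15 nz15]; norm_num [fl16]
  · rw [partDen_get C₁₀ 16 nz16]; norm_num [fl17]
end
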